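/- Suppose b is continuously differentiable and c continuous on [a, ∞), and Q(x) = -(1/4)(b(x)² - 4c(x) + 2b'(x)) satisfies Q(x) ≥ ε² for some ε > 0 and all x ≥ a. Then every nontrivial solution ψ of y'' + b(x)y' + c(x)y = 0 has infinitely many zeros in [a, ∞). -/

import Mathlib

/-- Theorem 2.2: if Q = -(1/4)(b² - 4c + 2b') ≥ ε² on [a,∞) then every
nontrivial solution of y'' + b y' + c y = 0 oscillates on [a,∞). -/
theorem oscillation_general (b c ψ : ℝ → ℝ) (a ε : ℝ) (hε : 0 < ε)
    (hb : ContDiff ℝ 1 b) (hc : ContinuousOn c (Set.Ici a))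
    (hQ : ∀ x, a ≤ x → ε ^ 2 ≤ -(1/4) * (b x ^ 2 - 4 * c x + 2 * deriv b x))
    (hψd : Differentiable ℝ ψ) (hψd' : Differentiable ℝ (deriv ψ))
    (hode : ∀ x, a ≤ x → deriv (deriv ψ) x + b x * deriv ψ x + c x * ψ x = 0)
    (hnt : ∃ x, a ≤ x ∧ ψ x ≠ 0) :
    {x | a ≤ x ∧ ψ x = 0}.Infinite := by
  by_contra hfin
  rw [Set.not_infinite] at hfin
  obtain ⟨M, hM⟩ := hfin.bddAbove
  set X : ℝ := max a M with hX
  -- beyond X, ψ never vanishes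
  have hne : ∀ x, X < x → ψ x ≠ 0 := by
    intro x hx h0
    have hax : a ≤ x := le_of_lt (lt_of_le_of_lt (le_max_left a M) hx)
    have : x ≤ M := hM ⟨hax, h0⟩
    exact absurd (lt_of_le_of_lt (le_max_right a M) hx) (not_lt.mpr this)
  have haX : ∀ x, X < x → a ≤ x := fun x hx => le_of_lt (lt_of_le_of_lt (le_max_left a M) hx)
  set Q : ℝ → ℝ := fun x => c x - b x ^ 2 / 4 - deriv b x / 2 with hQdef
  have hQ' : ∀ x, X < x → ε ^ 2 ≤ Q x := by
    intro x hx
    have := hQ x (haX x hx)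
    simp only [hQdef]; linarith
  set g : ℝ → ℝ := fun x => deriv ψ x / ψ x + b x / 2 with hg
  -- Riccati equation
  have key : ∀ x, X < x → HasDerivAt g (-(g x) ^ 2 - Q x) x := by
    intro x hx
    have hψx := hne x hx
    have h1 : HasDerivAt ψ (deriv ψ x) x := (hψd x).hasDerivAt
    have h2 : HasDerivAt (deriv ψ) (deriv (deriv ψ) x) x := (hψd' x).hasDerivAt
    have h3 : HasDerivAt b (deriv b x) x := ((hb.differentiable one_ne_zero) x).hasDerivAt
    have h4 := (h2.div h1 hψx).add (h3.div_const 2)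
    refine h4.congr_deriv ?_
    have hode' := hode x (haX x hx)
    have hd2 : deriv (deriv ψ) x = -(b x * deriv ψ x + c x * ψ x) := by linarith
    simp only [hg, hQdef, hd2]
    field_simp
    ring
  have hε2 : (0:ℝ) < ε ^ 2 := by positivity
  set u : ℝ := X + 1 with hu
  have huX : X < u := by simp [hu]
  -- g x + ε² x is antitone on Ici u
  have hanti : AntitoneOn (fun x => g x + ε ^ 2 * x) (Set.Ici u) := by
    apply antitoneOn_of_deriv_nonpos (convex_Ici u)
    · intro x hx
      have hx' : X < x := lt_of_lt_of_le huX hx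
      exact ((key x hx').add ((hasDerivAt_id x).const_mul (ε ^ 2))).continuousAt.continuousWithinAt
    · intro x hx
      rw [interior_Ici] at hx
      have hx' : X < x := lt_trans huX hx
      have hd : HasDerivAt (fun x => g x + ε ^ 2 * x) (-(g x) ^ 2 - Q x + ε ^ 2 * 1) x := by
        exact (key x hx').add ((hasDerivAt_id' x).const_mul (ε ^ 2))
      exact hd.differentiableAt.differentiableWithinAt
    · intro x hx
      rw [interior_Ici] at hx
      have hx' : X < x := lt_trans huX hx
      have hd : HasDerivAt (fun x => g x + ε ^ 2 * x) (-(g x) ^ 2 - Q x + ε ^ 2 * 1) x := by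
        exact (key x hx').add ((hasDerivAt_id' x).const_mul (ε ^ 2))
      rw [hd.deriv]
      have := hQ' x hx'
      nlinarith [sq_nonneg (g x)]
  have hbound : ∀ x, u ≤ x → g x ≤ g u - ε ^ 2 * (x - u) := by
    intro x hx
    have := hanti (Set.self_mem_Ici) hx hx
    simp only at this
    nlinarith
  set v : ℝ := u + (|g u| + 1) / ε ^ 2 with hv
  have huv : u < v := by
    have : (0:ℝ) < (|g u| + 1) / ε ^ 2 := by positivity
    simp [hv]; linarith
  have hgv : ∀ x, v ≤ x → g x ≤ -1 := by
    intro x hx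
    have h1 := hbound x (le_trans (le_of_lt huv) hx)
    have h2 : (|g u| + 1) / ε ^ 2 ≤ x - u := by
      simp only [hv] at hx; linarith
    have h3 : |g u| + 1 ≤ ε ^ 2 * (x - u) := by
      rw [div_le_iff₀ hε2] at h2; linarith
    have := le_abs_self (g u)
    linarith
  -- φ = 1/g - x is monotone on [v, v+1]
  have hmono : MonotoneOn (fun x => (g x)⁻¹ - x) (Set.Icc v (v + 1)) := by
    apply monotoneOn_of_deriv_nonneg (convex_Icc v (v + 1))
    · intro x hx
      have hxv : v ≤ x := hx.1
      have hx' : X < x := lt_trans huX (lt_of_lt_of_le huv hxv)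
      have hgx : g x ≠ 0 := by have := hgv x hxv; linarith
      exact (((key x hx').inv hgx).sub (hasDerivAt_id x)).continuousAt.continuousWithinAt
    · intro x hx
      rw [interior_Icc] at hx
      have hxv : v ≤ x := le_of_lt hx.1
      have hx' : X < x := lt_trans huX (lt_of_lt_of_le huv hxv)
      have hgx1 : g x ≤ -1 := hgv x hxv
      have hgx : g x ≠ 0 := by linarith
      have hd : HasDerivAt (fun x => (g x)⁻¹ - x) (-(-(g x) ^ 2 - Q x) / g x ^ 2 - 1) x := by
        exact ((key x hx').inv hgx).sub (hasDerivAt_id' x)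
      exact hd.differentiableAt.differentiableWithinAt
    · intro x hx
      rw [interior_Icc] at hx
      have hxv : v ≤ x := le_of_lt hx.1
      have hx' : X < x := lt_trans huX (lt_of_lt_of_le huv hxv)
      have hgx1 : g x ≤ -1 := hgv x hxv
      have hgx : g x ≠ 0 := by linarith
      have hd : HasDerivAt (fun x => (g x)⁻¹ - x) (-(-(g x) ^ 2 - Q x) / g x ^ 2 - 1) x := by
        exact ((key x hx').inv hgx).sub (hasDerivAt_id' x)
      rw [hd.deriv]
      have hQx := hQ' x hx'
      have hg2 : (1:ℝ) ≤ g x ^ 2 := by nlinarith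
      have hgoal : -(-(g x) ^ 2 - Q x) / g x ^ 2 - 1 = Q x / g x ^ 2 := by
        field_simp
        ring
      rw [hgoal]
      apply div_nonneg (by linarith [sq_nonneg ε]) (sq_nonneg _)
  have h1 := hmono (Set.left_mem_Icc.mpr (by linarith)) (Set.right_mem_Icc.mpr (by linarith)) (by linarith)
  simp only at h1
  have hgv1 : g v ≤ -1 := hgv v le_rfl
  have hgv2 : g (v + 1) ≤ -1 := hgv (v + 1) (by linarith)
  have hinv1 : (-1:ℝ) ≤ (g v)⁻¹ := by
    have hne' : g v ≠ 0 := by linarith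
    have h2 : (-(g v))⁻¹ ≤ 1 := inv_le_one_of_one_le₀ (by linarith)
    rw [inv_neg] at h2
    linarith
  have hinv2 : (g (v + 1))⁻¹ < 0 := inv_lt_zero.mpr (by linarith)
  linarith
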